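/- Oscillating profiles corollary. There exist a limit computable set A ⊆ ℕ and sets W_0, W_1, … ⊆ ℕ such that W_n ≡_bfo A for every n ∈ ℕ, and ¬(W_n ≤₁ W_m) whenever n ≠ m. Hence {deg₁(W_n) : n ∈ ℕ} is an infinite antichain of 1-degrees inside a single bounded finite-one degree. -/

import Mathlib

/-- One-one reducibility: `B ≤₁ C` via a total computable injective function. -/
def OneOneRed (B C : Set ℕ) : Prop :=
  ∃ f : ℕ → ℕ, Computable f ∧ Function.Injective f ∧ ∀ x, x ∈ B ↔ f x ∈ C

/-- Strict one-one reducibility: `B <₁ C`. -/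
def OneOneLt (B C : Set ℕ) : Prop :=
  OneOneRed B C ∧ ¬ OneOneRed C B

/-- Bounded finite-one reducibility: `B ≤_bfo C` via a total computable function
all of whose fibers have size at most some constant `c ≥ 1`. -/
def BfoRed (B C : Set ℕ) : Prop :=
  ∃ f : ℕ → ℕ, Computable f ∧
    (∃ c : ℕ, 1 ≤ c ∧ ∀ y, {x | f x = y}.encard ≤ (c : ℕ∞)) ∧
    ∀ x, x ∈ B ↔ f x ∈ C

/-- Bounded finite-one equivalence: `B ≡_bfo C`. -/
def BfoEquiv (B C : Set ℕ) : Prop :=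
  BfoRed B C ∧ BfoRed C B

/-- `A` is limit computable (equivalently `A ≤_T ∅'`, i.e. `Δ⁰₂`). -/
def LimitComputable (A : Set ℕ) : Prop :=
  ∃ g : ℕ → ℕ → Bool, Computable₂ g ∧
    ∀ n, ∃ s₀, ∀ s, s₀ ≤ s → (g s n = true ↔ n ∈ A)

/-- `a_k`, the left endpoint of the `k`-th block `I_k = [a_k, a_{k+1})`;
`a_0 = 0` and `a_{k+1} = a_k + k!`. -/
def blockStart (k : ℕ) : ℕ := ∑ m ∈ Finset.range k, Nat.factorial m


namespace Osc
open Nat.Partrec (Code)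
open Nat.Partrec.Code

def color (k : ℕ) : ℕ := (Nat.unpair k).1

def cnt (m : ℕ) (L : List ℕ) : ℕ := (L.filter (fun k => color k == m)).length

open Classical in
noncomputable def pval (c : Code) (x : ℕ) : ℕ :=
  if h : (eval c x).Dom then (eval c x).get h else 0

open Classical in
noncomputable def Omega (p : ℕ) : ℕ :=
  if ∀ x ∈ List.range p.unpair.2, (eval (Denumerable.ofNat Code p.unpair.1) x).Dom then
    1 + ((List.range p.unpair.2).map (pval (Denumerable.ofNat Code p.unpair.1))).foldr max 0
  else 0

def OmegaA (s p : ℕ) : ℕ :=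
  bif (List.range p.unpair.2).all (fun x => (evaln s (Denumerable.ofNat Code p.unpair.1) x).isSome) then
    1 + ((List.range p.unpair.2).map
      (fun x => (evaln s (Denumerable.ofNat Code p.unpair.1) x).getD 0)).foldr max 0
  else 0

def dec_e (i : ℕ) : ℕ := i.unpair.1
def dec_n (i : ℕ) : ℕ := i.unpair.2.unpair.1
def dec_m (i : ℕ) : ℕ := i.unpair.2.unpair.2

def newL (b n t : ℕ) : List ℕ := (List.range t).map fun j => Nat.pair n (b + j)

def nextL (i : ℕ) (st : List ℕ × ℕ) : List ℕ :=
  st.1 ++ newL (st.2 + st.1.foldr max 0 + dec_n i + 1) (dec_n i) (cnt (dec_m i) st.1 + 1)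

def step (O : ℕ → ℕ) (i : ℕ) (st : List ℕ × ℕ) : List ℕ × ℕ :=
  (nextL i st,
    max (max st.2 ((nextL i st).foldr max 0 + 1))
      (O (Nat.pair (dec_e i) (2 * ((nextL i st).foldr max 0 + 1)))))

def runO (O : ℕ → ℕ) : ℕ → List ℕ × ℕ
  | 0 => ([], 0)
  | i + 1 => step O i (runO O i)

/- basic list facts -/
theorem le_foldr_max {L : List ℕ} {y : ℕ} (h : y ∈ L) : y ≤ L.foldr max 0 := by
  induction L with
  | nil => cases h
  | cons a L ih =>
    rcases List.mem_cons.1 h with rfl | h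
    · exact le_max_left _ _
    · exact le_trans (ih h) (le_max_right _ _)

theorem mem_newL {b n t x : ℕ} :
    x ∈ newL b n t ↔ ∃ j < t, x = Nat.pair n (b + j) := by
  simp only [newL, List.mem_map, List.mem_range]
  constructor
  · rintro ⟨j, hj, rfl⟩; exact ⟨j, hj, rfl⟩
  · rintro ⟨j, hj, rfl⟩; exact ⟨j, hj, rfl⟩

theorem newL_gt {b n t x : ℕ} (h : x ∈ newL b n t) : b ≤ x := by
  rcases mem_newL.1 h with ⟨j, _, rfl⟩
  exact le_trans (Nat.le_add_right b j) (Nat.right_le_pair _ _)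

theorem newL_color {b n t x : ℕ} (h : x ∈ newL b n t) : color x = n := by
  rcases mem_newL.1 h with ⟨j, _, rfl⟩
  simp [color]

theorem newL_nodup {b n t : ℕ} : (newL b n t).Nodup := by
  refine List.Nodup.map ?_ List.nodup_range
  intro a b' h
  have := (Nat.pair_eq_pair.1 h).2
  omega

theorem newL_length {b n t : ℕ} : (newL b n t).length = t := by
  simp [newL]

theorem cnt_append (m : ℕ) (L₁ L₂ : List ℕ) :
    cnt m (L₁ ++ L₂) = cnt m L₁ + cnt m L₂ := by
  simp [cnt]

theorem cnt_newL_self {b n t : ℕ} : cnt n (newL b n t) = t := by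
  have : ∀ x ∈ newL b n t, (color x == n) = true := by
    intro x hx; simp [newL_color hx]
  rw [cnt, List.filter_eq_self.2 this, newL_length]

theorem cnt_newL_ne {b n t m : ℕ} (h : n ≠ m) : cnt m (newL b n t) = 0 := by
  have : ∀ x ∈ newL b n t, ¬((color x == m) = true) := by
    intro x hx; simp [newL_color hx]; exact h
  simp [cnt, List.filter_eq_nil_iff.2 this]

theorem cnt_le_length (m : ℕ) (L : List ℕ) : cnt m L ≤ L.length :=
  List.length_filter_le _ _

section Run
variable (O : ℕ → ℕ)

theorem run_succ (i : ℕ) : runO O (i + 1) = step O i (runO O i) := rfl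

theorem run_succ_L (i : ℕ) : (runO O (i + 1)).1 = nextL i (runO O i) := rfl

theorem mem_succ_cases {i x : ℕ} (hx : x ∈ (runO O (i+1)).1) :
    x ∈ (runO O i).1 ∨
      ((runO O i).2 + (runO O i).1.foldr max 0 + dec_n i + 1 ≤ x ∧ color x = dec_n i) := by
  rw [run_succ_L] at hx
  rcases List.mem_append.1 hx with h | h
  · exact Or.inl h
  · exact Or.inr ⟨newL_gt h, newL_color h⟩

theorem fl_succ_ge_top (i : ℕ) : (runO O (i+1)).1.foldr max 0 < (runO O (i+1)).2 := by
  rw [run_succ]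
  simp only [step]
  have h2 : (List.foldr max 0 (nextL i (runO O i)) + 1) ≤
      max (runO O i).2 (List.foldr max 0 (nextL i (runO O i)) + 1) := le_max_right _ _
  have h3 := le_max_left (max (runO O i).2 (List.foldr max 0 (nextL i (runO O i)) + 1))
    (O (Nat.pair (dec_e i) (2 * (List.foldr max 0 (nextL i (runO O i)) + 1))))
  exact lt_of_lt_of_le (Nat.lt_succ_self _) (le_trans h2 h3)

theorem mem_lt_fl : ∀ i, ∀ y ∈ (runO O i).1, y < (runO O i).2 := by
  intro i
  cases i with
  | zero => intro y hy; simp [runO] at hy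
  | succ i =>
    intro y hy
    exact lt_of_le_of_lt (le_foldr_max hy) (fl_succ_ge_top O i)

theorem fl_mono {i j : ℕ} (h : i ≤ j) : (runO O i).2 ≤ (runO O j).2 := by
  induction j with
  | zero => simp_all
  | succ j ih =>
    rcases Nat.lt_or_ge i (j+1) with h' | h'
    · refine le_trans (ih (Nat.lt_succ_iff.1 h')) ?_
      rw [run_succ]
      exact le_trans (le_max_left _ _) (le_max_left _ _)
    · have : i = j + 1 := le_antisymm h h'
      simp [this]

theorem L_mono {i j : ℕ} (h : i ≤ j) : ∀ k ∈ (runO O i).1, k ∈ (runO O j).1 := by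
  induction j with
  | zero => intro k hk; have : i = 0 := Nat.le_zero.1 h; simpa [this] using hk
  | succ j ih =>
    intro k hk
    rcases Nat.lt_or_ge i (j+1) with h' | h'
    · have := ih (Nat.lt_succ_iff.1 h') k hk
      rw [run_succ_L]; exact List.mem_append.2 (Or.inl this)
    · have : i = j + 1 := le_antisymm h h'
      subst this; exact hk

theorem stable {i j : ℕ} (h : i ≤ j) :
    ∀ k ∈ (runO O j).1, k ≤ (runO O i).2 → k ∈ (runO O i).1 := by
  induction j with
  | zero =>
    intro k hk _
    have : i = 0 := by omega
    subst this; exact hk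
  | succ j ih =>
    intro k hk hle
    rcases Nat.lt_or_ge i (j+1) with h' | h'
    · have hij : i ≤ j := Nat.lt_succ_iff.1 h'
      rcases mem_succ_cases O hk with hk' | ⟨hge, _⟩
      · exact ih hij k hk' hle
      · have := fl_mono O hij
        omega
    · have : i = j + 1 := le_antisymm h h'
      subst this; exact hk

theorem top_ge : ∀ i, i ≤ (runO O i).1.foldr max 0 := by
  intro i
  induction i with
  | zero => simp
  | succ i ih =>
    set st := runO O i with hst
    have hmem : Nat.pair (dec_n i) (st.2 + st.1.foldr max 0 + dec_n i + 1) ∈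
        newL (st.2 + st.1.foldr max 0 + dec_n i + 1) (dec_n i) (cnt (dec_m i) st.1 + 1) := by
      rw [mem_newL]; exact ⟨0, by omega, by simp⟩
    have hge := newL_gt hmem
    have hmem' : Nat.pair (dec_n i) (st.2 + st.1.foldr max 0 + dec_n i + 1) ∈ (runO O (i+1)).1 := by
      rw [run_succ_L]; exact List.mem_append.2 (Or.inr hmem)
    have := le_foldr_max hmem'
    omega

theorem nodup : ∀ i, (runO O i).1.Nodup := by
  intro i
  induction i with
  | zero => simp [runO]
  | succ i ih =>
    rw [run_succ_L]
    refine List.Nodup.append ih newL_nodup ?_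
    intro x hx hx'
    have h1 := le_foldr_max hx
    have h2 := newL_gt hx'
    omega

theorem mem_decided {j k : ℕ} (h : k ∈ (runO O j).1) : k ∈ (runO O (k+1)).1 := by
  induction j with
  | zero => simp [runO] at h
  | succ j ih =>
    rcases Nat.lt_or_ge j (k+1) with h' | h'
    · exact L_mono O h' k h
    · rcases mem_succ_cases O h with h'' | ⟨hge, _⟩
      · exact ih h''
      · have := top_ge O j
        omega

theorem cnt_next (i : ℕ) (hnm : dec_n i ≠ dec_m i) :
    cnt (dec_n i) ((runO O (i+1)).1) = cnt (dec_m i) ((runO O (i+1)).1) + cnt (dec_n i) ((runO O i).1) + 1 := by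
  rw [run_succ_L, nextL, cnt_append, cnt_append, cnt_newL_self, cnt_newL_ne hnm]
  omega

end Run
end Osc
namespace Osc
open Nat.Partrec (Code)
open Nat.Partrec.Code

noncomputable def X : Set ℕ := {k | k ∈ (runO Omega (k+1)).1}

noncomputable def A : Set ℕ := {x | x % 2 = 0 ∧ x / 2 ∈ X}

noncomputable def W (n : ℕ) : Set ℕ := {x | x / 2 ∈ X ∧ (x % 2 = 0 ∨ color (x / 2) = n)}

theorem mem_X_of_mem {j k : ℕ} (h : k ∈ (runO Omega j).1) : k ∈ X :=
  mem_decided Omega h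

theorem W_card (c : ℕ) [DecidablePred (fun x => x ∈ W c)] {L : List ℕ} {B : ℕ} (hnd : L.Nodup)
    (h1 : ∀ k ∈ L, k ≤ B) (h2 : ∀ k, k ∈ X → k ≤ B → k ∈ L) (h3 : ∀ k ∈ L, k ∈ X) :
    ((Finset.range (2*(B+1))).filter (fun x => x ∈ W c)).card = L.length + cnt c L := by
  classical
  have himg : (Finset.range (2*(B+1))).filter (fun x => x ∈ W c) =
      L.toFinset.image (fun k => 2*k) ∪
        (L.toFinset.filter (fun k => color k = c)).image (fun k => 2*k+1) := by
    ext x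
    simp only [Finset.mem_filter, Finset.mem_range, Finset.mem_union, Finset.mem_image,
      List.mem_toFinset, W, Set.mem_setOf_eq]
    constructor
    · rintro ⟨hx, hX, hpar⟩
      have hk : x / 2 ∈ L := h2 _ hX (by omega)
      rcases hpar with he | hc
      · exact Or.inl ⟨x/2, hk, by omega⟩
      · rcases Nat.even_or_odd x with he | ho
        · rcases he with ⟨y, hy⟩
          exact Or.inl ⟨x/2, hk, by omega⟩
        · rcases ho with ⟨y, hy⟩
          exact Or.inr ⟨x/2, ⟨hk, hc⟩, by omega⟩
    · rintro (⟨k, hk, rfl⟩ | ⟨k, ⟨hk, hc⟩, rfl⟩)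
      · have hB := h1 k hk
        have hdiv : 2 * k / 2 = k := by omega
        refine ⟨by omega, ?_, Or.inl (by omega)⟩
        rw [hdiv]; exact h3 k hk
      · have hB := h1 k hk
        have hdiv : (2 * k + 1) / 2 = k := by omega
        exact ⟨by omega, by rw [hdiv]; exact h3 k hk, Or.inr (by rw [hdiv]; exact hc)⟩
  rw [himg, Finset.card_union_of_disjoint, Finset.card_image_of_injective _ (fun a b h => by omega),
    Finset.card_image_of_injective _ (fun a b h => by omega)]
  · congr 1
    · exact List.toFinset_card_of_nodup hnd
    · have hfe : L.toFinset.filter (fun k => color k = c) =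
          (L.filter (fun k => color k == c)).toFinset := by
        rw [List.toFinset_filter]
        simp
      rw [hfe, List.toFinset_card_of_nodup (hnd.filter _)]
      rfl
  · rw [Finset.disjoint_left]
    intro a ha hb
    rcases Finset.mem_image.1 ha with ⟨k, _, rfl⟩
    rcases Finset.mem_image.1 hb with ⟨k', _, h⟩
    omega

theorem not_oneOneRed {n m : ℕ} (hnm : n ≠ m) (f : ℕ → ℕ) (fc : Computable f)
    (finj : Function.Injective f) (hred : ∀ x, x ∈ W n ↔ f x ∈ W m) : False := by
  classical
  obtain ⟨cd, hcd⟩ := exists_code.1 (Partrec.nat_iff.1 fc)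
  set e := Encodable.encode cd with he
  set i := Nat.pair e (Nat.pair n m) with hi
  have hde : dec_e i = e := by simp [dec_e, hi]
  have hdn : dec_n i = n := by simp [dec_n, hi]
  have hdm : dec_m i = m := by simp [dec_m, hi]
  set st := runO Omega i with hst
  have hL' : (runO Omega (i+1)).1 = nextL i st := rfl
  set L' := nextL i st with hL'def
  set T := L'.foldr max 0 with hT
  set K := T + 1 with hK
  have hofn : Denumerable.ofNat Code e = cd := Denumerable.ofNat_encode cd
  have hevalx : ∀ x, eval cd x = Part.some (f x) := by
    intro x; rw [hcd]; rfl
  have hpval : ∀ x, pval cd x = f x := by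
    intro x; simp [pval, hevalx]
  have hdom : ∀ x ∈ List.range ((Nat.pair e (2*K)).unpair.2),
      (eval (Denumerable.ofNat Code ((Nat.pair e (2*K)).unpair.1)) x).Dom := by
    simp [Nat.unpair_pair, hofn, hevalx]
  have hq : Omega (Nat.pair e (2*K)) =
      1 + ((List.range (2*K)).map (pval cd)).foldr max 0 := by
    rw [Omega, if_pos hdom]
    simp [Nat.unpair_pair, hofn]
  have hfl : (runO Omega (i+1)).2 =
      max (max st.2 K) (Omega (Nat.pair e (2*K))) := by
    rw [run_succ]; simp only [step]; rw [hde]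
  set fl' := (runO Omega (i+1)).2 with hfl'
  have hKfl' : K ≤ fl' := by
    rw [hfl]; exact le_trans (le_max_right _ _) (le_max_left _ _)
  have hqfl' : Omega (Nat.pair e (2*K)) ≤ fl' := by
    rw [hfl]; exact le_max_right _ _
  have hffl : ∀ x, x < 2*K → f x < fl' := by
    intro x hx
    have hmem : f x ∈ (List.range (2*K)).map (pval cd) :=
      List.mem_map.2 ⟨x, List.mem_range.2 hx, hpval x⟩
    have h1 := le_foldr_max hmem
    omega
  have hL'X : ∀ k ∈ L', k ∈ X := by
    intro k hk; rw [← hL'] at hk; exact mem_X_of_mem hk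
  have hL'top : ∀ k ∈ L', k ≤ T := fun k hk => le_foldr_max hk
  have hstab : ∀ k, k ∈ X → k ≤ fl' → k ∈ L' := by
    intro k hkX hk
    have h1 : k ∈ (runO Omega (max (k+1) (i+1))).1 :=
      L_mono Omega (le_max_left _ _) k hkX
    rw [← hL']
    exact stable Omega (le_max_right _ _) k h1 hk
  have hstabT : ∀ k, k ∈ X → k ≤ T → k ∈ L' := fun k h1 h2 =>
    hstab k h1 (le_trans h2 (le_trans (Nat.le_succ T) hKfl'))
  have hnd : L'.Nodup := by rw [← hL']; exact nodup Omega (i+1)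
  have hSn := W_card n hnd hL'top hstabT hL'X
  have hSm := W_card m hnd (fun k hk => le_trans (hL'top k hk) (le_trans (Nat.le_succ T) hKfl'))
    hstab hL'X
  have hinj : ((Finset.range (2*(T+1))).filter (fun x => x ∈ W n)).card ≤
      ((Finset.range (2*(fl'+1))).filter (fun x => x ∈ W m)).card := by
    refine Finset.card_le_card_of_injOn f ?_ (finj.injOn)
    intro x hx
    rcases Finset.mem_filter.1 hx with ⟨hxr, hxW⟩
    have hxr' := Finset.mem_range.1 hxr
    have h1 : f x < fl' := hffl x (by omega)
    exact Finset.mem_filter.2 ⟨Finset.mem_range.2 (by omega), (hred x).1 hxW⟩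
  have hcnt : cnt n L' = cnt m L' + cnt n st.1 + 1 := by
    have := cnt_next Omega i (by rw [hdn, hdm]; exact hnm)
    rw [hdn, hdm, hL', ← hst] at this
    exact this
  omega

end Osc
namespace Osc
open Nat.Partrec (Code)
open Nat.Partrec.Code

/-! ### Convergence of the approximations -/

theorem OmegaA_lim (p : ℕ) : ∃ s₀, ∀ s, s₀ ≤ s → OmegaA s p = Omega p := by
  classical
  set c := Denumerable.ofNat Code p.unpair.1 with hc
  set b := p.unpair.2 with hb
  by_cases h : ∀ x ∈ List.range b, (eval c x).Dom
  · have H : ∀ N, ∃ s₀, ∀ x, x < N → x < b → pval c x ∈ evaln s₀ c x := by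
      intro N
      induction N with
      | zero => exact ⟨0, by omega⟩
      | succ N ih =>
        obtain ⟨s₀, hs₀⟩ := ih
        by_cases hNb : N < b
        · have hd := h N (List.mem_range.2 hNb)
          have hm : pval c N ∈ eval c N := by
            rw [pval, dif_pos hd]; exact Part.get_mem hd
          obtain ⟨k, hk⟩ := evaln_complete.1 hm
          refine ⟨max s₀ k, fun x hx hxb => ?_⟩
          rcases Nat.lt_succ_iff_lt_or_eq.1 hx with h' | rfl
          · exact evaln_mono (le_max_left _ _) (hs₀ x h' hxb)
          · exact evaln_mono (le_max_right _ _) hk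
        · exact ⟨s₀, fun x hx hxb => hs₀ x (by omega) hxb⟩
    obtain ⟨s₀, hs₀⟩ := H b
    refine ⟨s₀, fun s hs => ?_⟩
    have hev : ∀ x, x < b → evaln s c x = some (pval c x) := fun x hx =>
      evaln_mono hs (hs₀ x hx hx)
    have hall : (List.range b).all (fun x => (evaln s c x).isSome) = true := by
      rw [List.all_eq_true]
      intro x hx
      rw [hev x (List.mem_range.1 hx)]; rfl
    have hmap : (List.range b).map (fun x => (evaln s c x).getD 0) =
        (List.range b).map (pval c) := by
      refine List.map_congr_left ?_
      intro x hx
      rw [hev x (List.mem_range.1 hx)]; rfl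
    rw [OmegaA, Omega]
    rw [← hc, ← hb, hall, if_pos h, hmap]
    rfl
  · refine ⟨0, fun s _ => ?_⟩
    have hall : ¬ ((List.range b).all (fun x => (evaln s c x).isSome) = true) := by
      rw [List.all_eq_true]
      intro hforall
      apply h
      intro x hx
      have h1 := hforall x hx
      rcases Option.isSome_iff_exists.1 h1 with ⟨y, hy⟩
      have : y ∈ eval c x := evaln_sound (by rw [hy]; rfl)
      exact Part.dom_iff_mem.2 ⟨y, this⟩
    rw [OmegaA, Omega, ← hc, ← hb, if_neg h, Bool.not_eq_true] at *
    rw [hall]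
    rfl

theorem run_lim (i : ℕ) : ∃ s₀, ∀ s, s₀ ≤ s → runO (OmegaA s) i = runO Omega i := by
  induction i with
  | zero => exact ⟨0, fun s _ => rfl⟩
  | succ i ih =>
    obtain ⟨s₀, h₀⟩ := ih
    obtain ⟨s₁, h₁⟩ := OmegaA_lim
      (Nat.pair (dec_e i) (2 * ((nextL i (runO Omega i)).foldr max 0 + 1)))
    refine ⟨max s₀ s₁, fun s hs => ?_⟩
    rw [run_succ, run_succ, h₀ s (le_trans (le_max_left _ _) hs)]
    simp only [step]
    rw [h₁ s (le_trans (le_max_right _ _) hs)]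

/-! ### membership as a Bool -/

def memB (k : ℕ) (L : List ℕ) : Bool := L.foldr (fun a b => (a == k) || b) false

theorem memB_iff {k : ℕ} {L : List ℕ} : memB k L = true ↔ k ∈ L := by
  induction L with
  | nil => simp [memB]
  | cons a L ih =>
    simp only [memB, List.foldr_cons, Bool.or_eq_true, beq_iff_eq, List.mem_cons]
    rw [memB] at ih
    rw [ih]
    exact or_congr eq_comm Iff.rfl

def gApp (s x : ℕ) : Bool :=
  ((x % 2) == 0) && memB (x / 2) (runO (OmegaA s) (x / 2 + 1)).1

/-! ### Primrec proofs -/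

theorem primrec_foldrmax : Primrec (fun L : List ℕ => L.foldr max 0) := by
  have h : Primrec (fun p : List ℕ × (ℕ × ℕ) => max p.2.1 p.2.2) :=
    Primrec.nat_max.comp (Primrec.fst.comp Primrec.snd) (Primrec.snd.comp Primrec.snd)
  exact Primrec.list_foldr Primrec.id (Primrec.const 0) h.to₂

theorem primrec_color : Primrec color :=
  (Primrec.fst.comp Primrec.unpair)

theorem primrec_cnt : Primrec₂ cnt := by
  have h : Primrec (fun p : ℕ × (ℕ × ℕ) => bif color p.2.1 == p.1 then p.2.2 + 1 else p.2.2) := by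
    refine Primrec.cond ?_ ?_ ?_
    · exact Primrec.beq.comp (primrec_color.comp (Primrec.fst.comp Primrec.snd)) Primrec.fst
    · exact Primrec.succ.comp (Primrec.snd.comp Primrec.snd)
    · exact Primrec.snd.comp Primrec.snd
  have h2 : Primrec (fun p : ℕ × List ℕ =>
      p.2.foldr (fun k acc => bif color k == p.1 then acc + 1 else acc) 0) :=
    Primrec.list_foldr Primrec.snd (Primrec.const 0) (h.comp (Primrec.pair (Primrec.fst.comp Primrec.fst) Primrec.snd)).to₂
  have h3 : Primrec (fun p : ℕ × List ℕ => cnt p.1 p.2) := by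
    refine h2.of_eq ?_
    rintro ⟨m, L⟩
    simp only
    induction L with
    | nil => rfl
    | cons a L ih =>
      rw [List.foldr_cons, ih]
      by_cases hc : (color a == m) = true
      · simp [cnt, List.filter_cons, hc]
      · simp only [Bool.not_eq_true] at hc
        simp [cnt, List.filter_cons, hc]
  exact h3.to₂

theorem primrec_newL : Primrec (fun x : ℕ × ℕ × ℕ => newL x.1 x.2.1 x.2.2) := by
  have h1 : Primrec (fun q : (ℕ × ℕ × ℕ) × ℕ => q.1.2.1) :=
    Primrec.comp Primrec.fst (Primrec.comp Primrec.snd Primrec.fst)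
  have h2 : Primrec (fun q : (ℕ × ℕ × ℕ) × ℕ => q.1.1 + q.2) :=
    Primrec₂.comp Primrec.nat_add (Primrec.comp Primrec.fst Primrec.fst) Primrec.snd
  have hmap : Primrec₂ (fun (x : ℕ × ℕ × ℕ) (j : ℕ) => Nat.pair x.2.1 (x.1 + j)) :=
    Primrec.to₂ (Primrec₂.comp Primrec₂.natPair h1 h2)
  exact Primrec.list_map (Primrec.list_range.comp (Primrec.snd.comp Primrec.snd)) hmap

theorem band_eq_cond (x y : Bool) : (x && y) = bif x then y else false := by
  cases x <;> rfl

theorem bor_eq_cond (x y : Bool) : (x || y) = bif x then true else y := by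
  cases x <;> rfl

set_option maxHeartbeats 1000000 in
theorem primrec_OmegaA : Primrec₂ OmegaA := by
  have hofn : Primrec (fun q : (ℕ × ℕ) × ℕ => Denumerable.ofNat Code q.1.2.unpair.1) :=
    (Primrec.ofNat Code).comp (Primrec.fst.comp (Primrec.unpair.comp
      (Primrec.snd.comp Primrec.fst)))
  have hargs : Primrec (fun q : (ℕ × ℕ) × ℕ =>
      ((q.1.1, Denumerable.ofNat Code q.1.2.unpair.1), q.2)) :=
    Primrec.pair (Primrec.pair (Primrec.fst.comp Primrec.fst) hofn) Primrec.snd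
  have hev : Primrec (fun q : (ℕ × ℕ) × ℕ =>
      evaln q.1.1 (Denumerable.ofNat Code q.1.2.unpair.1) q.2) :=
    Nat.Partrec.Code.primrec_evaln.comp hargs
  have hrange : Primrec (fun sp : ℕ × ℕ => List.range sp.2.unpair.2) :=
    Primrec.list_range.comp (Primrec.snd.comp (Primrec.unpair.comp Primrec.snd))
  -- condition bool
  have hcondh : Primrec (fun p : (ℕ × ℕ) × (ℕ × Bool) =>
      (evaln p.1.1 (Denumerable.ofNat Code p.1.2.unpair.1) p.2.1).isSome && p.2.2) := by
    refine (Primrec.cond (Primrec.option_isSome.comp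
      (hev.comp (Primrec.pair Primrec.fst (Primrec.fst.comp Primrec.snd))))
      (Primrec.snd.comp Primrec.snd) (Primrec.const false)).of_eq ?_
    intro p
    exact (band_eq_cond _ _).symm
  have hcond : Primrec (fun sp : ℕ × ℕ =>
      (List.range sp.2.unpair.2).foldr
        (fun x acc => (evaln sp.1 (Denumerable.ofNat Code sp.2.unpair.1) x).isSome && acc) true) :=
    Primrec.list_foldr hrange (Primrec.const true) hcondh.to₂
  have hvalh : Primrec₂ (fun (sp : ℕ × ℕ) (x : ℕ) =>
      (evaln sp.1 (Denumerable.ofNat Code sp.2.unpair.1) x).getD 0) :=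
    (Primrec.option_getD.comp (hev.comp (Primrec.pair Primrec.fst Primrec.snd))
      (Primrec.const 0)).to₂
  have hmap : Primrec (fun sp : ℕ × ℕ =>
      ((List.range sp.2.unpair.2).map
        (fun x => (evaln sp.1 (Denumerable.ofNat Code sp.2.unpair.1) x).getD 0))) :=
    Primrec.list_map hrange hvalh
  have hval : Primrec (fun sp : ℕ × ℕ => 1 + ((List.range sp.2.unpair.2).map
      (fun x => (evaln sp.1 (Denumerable.ofNat Code sp.2.unpair.1) x).getD 0)).foldr max 0) :=
    Primrec.nat_add.comp (Primrec.const 1) (primrec_foldrmax.comp hmap)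
  have hfinal : Primrec (fun sp : ℕ × ℕ => OmegaA sp.1 sp.2) := by
    refine (Primrec.cond hcond hval (Primrec.const 0)).of_eq ?_
    rintro ⟨s, p⟩
    have hall : (List.range p.unpair.2).foldr
        (fun x acc => (evaln s (Denumerable.ofNat Code p.unpair.1) x).isSome && acc) true =
        (List.range p.unpair.2).all
          (fun x => (evaln s (Denumerable.ofNat Code p.unpair.1) x).isSome) := by
      induction (List.range p.unpair.2) with
      | nil => rfl
      | cons a l ih => simp [List.all_cons, ih]
    simp only [hall]
    rfl
  exact hfinal.to₂

set_option maxHeartbeats 2000000 in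
theorem primrec_step : Primrec (fun a : ℕ × (ℕ × (List ℕ × ℕ)) =>
    step (OmegaA a.1) a.2.1 a.2.2) := by
  have hs : Primrec (fun a : ℕ × (ℕ × (List ℕ × ℕ)) => a.1) := Primrec.fst
  have hii : Primrec (fun a : ℕ × (ℕ × (List ℕ × ℕ)) => a.2.1) := Primrec.fst.comp Primrec.snd
  have hL : Primrec (fun a : ℕ × (ℕ × (List ℕ × ℕ)) => a.2.2.1) :=
    Primrec.fst.comp (Primrec.snd.comp Primrec.snd)
  have hfl : Primrec (fun a : ℕ × (ℕ × (List ℕ × ℕ)) => a.2.2.2) :=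
    Primrec.snd.comp (Primrec.snd.comp Primrec.snd)
  have pde : Primrec dec_e := Primrec.fst.comp Primrec.unpair
  have pdn : Primrec dec_n :=
    Primrec.fst.comp (Primrec.unpair.comp (Primrec.snd.comp Primrec.unpair))
  have pdm : Primrec dec_m :=
    Primrec.snd.comp (Primrec.unpair.comp (Primrec.snd.comp Primrec.unpair))
  have hde : Primrec (fun a : ℕ × (ℕ × (List ℕ × ℕ)) => dec_e a.2.1) := pde.comp hii
  have hdn : Primrec (fun a : ℕ × (ℕ × (List ℕ × ℕ)) => dec_n a.2.1) := pdn.comp hii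
  have hdm : Primrec (fun a : ℕ × (ℕ × (List ℕ × ℕ)) => dec_m a.2.1) := pdm.comp hii
  have htop : Primrec (fun a : ℕ × (ℕ × (List ℕ × ℕ)) => a.2.2.1.foldr max 0) :=
    primrec_foldrmax.comp hL
  have hcnt : Primrec (fun a : ℕ × (ℕ × (List ℕ × ℕ)) => cnt (dec_m a.2.1) a.2.2.1 + 1) :=
    Primrec.succ.comp (primrec_cnt.comp hdm hL)
  have hbase : Primrec (fun a : ℕ × (ℕ × (List ℕ × ℕ)) =>
      a.2.2.2 + a.2.2.1.foldr max 0 + dec_n a.2.1 + 1) :=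
    Primrec.succ.comp (Primrec.nat_add.comp (Primrec.nat_add.comp hfl htop) hdn)
  have hnew : Primrec (fun a : ℕ × (ℕ × (List ℕ × ℕ)) =>
      newL (a.2.2.2 + a.2.2.1.foldr max 0 + dec_n a.2.1 + 1) (dec_n a.2.1)
        (cnt (dec_m a.2.1) a.2.2.1 + 1)) :=
    primrec_newL.comp (Primrec.pair hbase (Primrec.pair hdn hcnt))
  have hnext : Primrec (fun a : ℕ × (ℕ × (List ℕ × ℕ)) => nextL a.2.1 a.2.2) :=
    Primrec.list_append.comp hL hnew
  have hK : Primrec (fun a : ℕ × (ℕ × (List ℕ × ℕ)) =>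
      (nextL a.2.1 a.2.2).foldr max 0 + 1) :=
    Primrec.succ.comp (primrec_foldrmax.comp hnext)
  have hq : Primrec (fun a : ℕ × (ℕ × (List ℕ × ℕ)) =>
      OmegaA a.1 (Nat.pair (dec_e a.2.1) (2 * ((nextL a.2.1 a.2.2).foldr max 0 + 1)))) :=
    Primrec₂.comp primrec_OmegaA hs (Primrec₂.comp Primrec₂.natPair hde
      (Primrec₂.comp Primrec.nat_mul (Primrec.const 2) hK))
  exact Primrec.pair hnext
    (Primrec.nat_max.comp (Primrec.nat_max.comp hfl hK) hq)

theorem primrec_run : Primrec₂ (fun s i => runO (OmegaA s) i) := by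
  have h := Primrec.nat_rec (f := fun _ : ℕ => (([], 0) : List ℕ × ℕ))
    (g := fun (s : ℕ) (p : ℕ × (List ℕ × ℕ)) => step (OmegaA s) p.1 p.2)
    (Primrec.const _) primrec_step.to₂
  refine h.of_eq ?_
  intro s i
  induction i with
  | zero => rfl
  | succ i ih => rw [run_succ]; simp only [← ih]

theorem primrec_memB : Primrec₂ memB := by
  have hh : Primrec (fun p : (ℕ × List ℕ) × (ℕ × Bool) => (p.2.1 == p.1.1) || p.2.2) := by
    refine (Primrec.cond (Primrec.beq.comp (Primrec.fst.comp Primrec.snd)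
      (Primrec.fst.comp Primrec.fst))
      (Primrec.const true) (Primrec.snd.comp Primrec.snd)).of_eq ?_
    intro p
    exact (bor_eq_cond _ _).symm
  have h2 : Primrec (fun p : ℕ × List ℕ =>
      p.2.foldr (fun a b => (a == p.1) || b) false) :=
    Primrec.list_foldr (Primrec.snd : Primrec (fun p : ℕ × List ℕ => p.2))
      (Primrec.const false) hh.to₂
  exact (h2.of_eq (fun p => rfl)).to₂

theorem primrec_gApp : Primrec₂ gApp := by
  have hx : Primrec (fun a : ℕ × ℕ => a.2) := Primrec.snd
  have hmod : Primrec (fun a : ℕ × ℕ => (a.2 % 2) == 0) :=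
    Primrec.beq.comp (Primrec.nat_mod.comp hx (Primrec.const 2)) (Primrec.const 0)
  have hdiv : Primrec (fun a : ℕ × ℕ => a.2 / 2) :=
    Primrec.nat_div.comp hx (Primrec.const 2)
  have hrun : Primrec (fun a : ℕ × ℕ => (runO (OmegaA a.1) (a.2 / 2 + 1)).1) :=
    Primrec.fst.comp (primrec_run.comp Primrec.fst (Primrec.succ.comp hdiv))
  have hmem : Primrec (fun a : ℕ × ℕ => memB (a.2 / 2) (runO (OmegaA a.1) (a.2 / 2 + 1)).1) :=
    primrec_memB.comp hdiv hrun
  refine ((Primrec.cond hmod hmem (Primrec.const false)).to₂).of_eq ?_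
  intro s x
  unfold gApp
  cases h : ((x % 2) == 0) <;> simp [h]

end Osc

namespace Osc
open Nat.Partrec (Code)
open Nat.Partrec.Code

theorem limitComputable_A : LimitComputable A := by
  refine ⟨gApp, Primrec₂.to_comp primrec_gApp, ?_⟩
  intro x
  by_cases hpar : x % 2 = 0
  · obtain ⟨s₀, hs₀⟩ := run_lim (x / 2 + 1)
    refine ⟨s₀, fun s hs => ?_⟩
    unfold gApp
    rw [hs₀ s hs]
    have hb : ((x % 2) == 0) = true := by simp [hpar]
    rw [hb, Bool.true_and]
    rw [memB_iff]
    constructor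
    · intro h; exact ⟨hpar, h⟩
    · intro h; exact h.2
  · refine ⟨0, fun s _ => ?_⟩
    unfold gApp
    have hb : ((x % 2) == 0) = false := by simp [hpar]
    rw [hb, Bool.false_and]
    constructor
    · intro h; cases h
    · intro h; exact absurd h.1 hpar

theorem encard_le_two_of_subset_pair {S : Set ℕ} {a b : ℕ} (h : S ⊆ {a, b}) :
    S.encard ≤ (2 : ℕ∞) := by
  calc S.encard ≤ ({a, b} : Set ℕ).encard := Set.encard_mono h
  _ ≤ ({b} : Set ℕ).encard + 1 := Set.encard_insert_le _ _
  _ = 2 := by rw [Set.encard_singleton]; rfl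

theorem primrecPred_even : PrimrecPred (fun x : ℕ => x % 2 = 0) :=
  PrimrecRel.comp Primrec.eq (Primrec₂.comp Primrec.nat_mod Primrec.id (Primrec.const 2))
    (Primrec.const 0)

theorem bfo_W_A (n : ℕ) : BfoRed (W n) A := by
  classical
  refine ⟨fun x => if x % 2 = 0 then x else (if color (x/2) = n then x - 1 else x),
    ?_, ⟨2, by norm_num, ?_⟩, ?_⟩
  · apply Primrec.to_comp
    refine Primrec.ite primrecPred_even Primrec.id (Primrec.ite ?_ ?_ Primrec.id)
    · refine PrimrecRel.comp Primrec.eq ?_ (Primrec.const n)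
      exact primrec_color.comp (Primrec₂.comp Primrec.nat_div Primrec.id (Primrec.const 2))
    · exact Primrec₂.comp Primrec.nat_sub Primrec.id (Primrec.const 1)
  · intro y
    refine encard_le_two_of_subset_pair (a := y) (b := y + 1) ?_
    intro x hx
    simp only [Set.mem_setOf_eq] at hx
    by_cases h1 : x % 2 = 0
    · rw [if_pos h1] at hx; exact Or.inl hx
    · rw [if_neg h1] at hx
      by_cases h2 : color (x/2) = n
      · rw [if_pos h2] at hx; right; simp only [Set.mem_singleton_iff]; omega
      · rw [if_neg h2] at hx; exact Or.inl hx
  · intro x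
    show x ∈ W n ↔ (if x % 2 = 0 then x else (if color (x/2) = n then x - 1 else x)) ∈ A
    by_cases h1 : x % 2 = 0
    · rw [if_pos h1]
      simp [W, A, h1]
    · by_cases h2 : color (x/2) = n
      · rw [if_neg h1, if_pos h2]
        have e1 : (x-1) % 2 = 0 := by omega
        have e2 : (x-1)/2 = x/2 := by omega
        simp [W, A, h1, h2, e1, e2]
      · rw [if_neg h1, if_neg h2]
        simp [W, A, h1, h2]

theorem bfo_A_W (n : ℕ) : BfoRed A (W n) := by
  classical
  refine ⟨fun x => if x % 2 = 0 then x else 2 * Nat.pair (n+1) x + 1,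
    ?_, ⟨2, by norm_num, ?_⟩, ?_⟩
  · apply Primrec.to_comp
    refine Primrec.ite primrecPred_even Primrec.id ?_
    exact Primrec.succ.comp (Primrec₂.comp Primrec.nat_mul (Primrec.const 2)
      (Primrec₂.comp Primrec₂.natPair (Primrec.const (n+1)) Primrec.id))
  · intro y
    refine encard_le_two_of_subset_pair (a := y) (b := (Nat.unpair (y/2)).2) ?_
    intro x hx
    simp only [Set.mem_setOf_eq] at hx
    by_cases h1 : x % 2 = 0
    · rw [if_pos h1] at hx; exact Or.inl hx
    · rw [if_neg h1] at hx
      right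
      simp only [Set.mem_singleton_iff]
      have hy : y / 2 = Nat.pair (n+1) x := by omega
      rw [hy, Nat.unpair_pair]
  · intro x
    show x ∈ A ↔ (if x % 2 = 0 then x else 2 * Nat.pair (n+1) x + 1) ∈ W n
    by_cases h1 : x % 2 = 0
    · rw [if_pos h1]
      simp [W, A, h1]
    · rw [if_neg h1]
      have hp : (2 * Nat.pair (n+1) x + 1) / 2 = Nat.pair (n+1) x := by omega
      have hm : (2 * Nat.pair (n+1) x + 1) % 2 = 1 := by omega
      have hcol : color (Nat.pair (n+1) x) = n + 1 := by simp [color]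
      constructor
      · intro hA; exact absurd hA.1 h1
      · rintro ⟨-, h⟩
        rcases h with h | h
        · rw [hm] at h; omega
        · rw [hp, hcol] at h; omega

end Osc


/-- **Oscillating profiles corollary.**  There exist a limit computable set `A`
and sets `W_0, W_1, …` with `W_n ≡_bfo A` for every `n` and `¬ W_n ≤₁ W_m`
whenever `n ≠ m`; so the `deg₁(W_n)` form an infinite antichain of 1-degrees
inside a single bounded finite-one degree. -/
theorem oscillating_profiles :
    ∃ (A : Set ℕ) (W : ℕ → Set ℕ),
      LimitComputable A ∧
      (∀ n, BfoEquiv (W n) A) ∧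
      (∀ n m, n ≠ m → ¬ OneOneRed (W n) (W m)) := by
  refine ⟨Osc.A, Osc.W, Osc.limitComputable_A, fun n => ⟨Osc.bfo_W_A n, Osc.bfo_A_W n⟩, ?_⟩
  rintro n m hnm ⟨f, fc, finj, hmem⟩
  exact Osc.not_oneOneRed hnm f fc finj hmem
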